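/- Σ_{μ ∈ M_n} H[μ;q] = Σ_{σ ∈ I_n} q^{ℓ̂(σ)}, where M_n is the set of Motzkin paths of length n, H[μ;q] = ∏_{i=1}^n H_i[μ;q] with H_i[μ;q] = [h_i(μ)]_q if step i is a down step and q^{h_i(μ)} otherwise, I_n is the set of involutions in S_n, and ℓ̂(σ) = (ℓ(σ)+c(σ))/2. -/

import Mathlib

open Finset

/-- Steps of a Motzkin path: up, level, down. -/
inductive Step | U | L | D
deriving DecidableEq

instance : Fintype Step :=
  ⟨{Step.U, Step.L, Step.D}, by intro x; cases x <;> simp⟩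

/-- `μ` is a Motzkin path: every prefix has at least as many `U`'s as `D`'s, and the
total numbers of `U`'s and `D`'s agree. -/
def IsMotzkin {n : ℕ} (μ : Fin n → Step) : Prop :=
  (∀ k : Fin n, (Finset.univ.filter (fun j => j ≤ k ∧ μ j = Step.D)).card
      ≤ (Finset.univ.filter (fun j => j ≤ k ∧ μ j = Step.U)).card)
  ∧ (Finset.univ.filter (fun j => μ j = Step.U)).card
    = (Finset.univ.filter (fun j => μ j = Step.D)).card

/-- The height of the `i`-th step of `μ`: the larger of the two `y`-coordinates of
the step, i.e. `#{j ≤ i : μ j = U} − #{j < i : μ j = D}`. -/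
def height {n : ℕ} (μ : Fin n → Step) (i : Fin n) : ℕ :=
  (Finset.univ.filter (fun j => j ≤ i ∧ μ j = Step.U)).card
    - (Finset.univ.filter (fun j => j < i ∧ μ j = Step.D)).card

/-- Biane's word of an involution: `U` if `i < σ i`, `L` if `i = σ i`, `D` if `i > σ i`. -/
def bpath {n : ℕ} (σ : Equiv.Perm (Fin n)) (i : Fin n) : Step :=
  if i < σ i then Step.U else if σ i = i then Step.L else Step.D

/-- Biane's label of step `i`: `|{j ≥ i : σ j ≤ σ i}|`. -/
def blabel {n : ℕ} (σ : Equiv.Perm (Fin n)) (i : Fin n) : ℕ :=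
  (Finset.univ.filter (fun j => i ≤ j ∧ σ j ≤ σ i)).card

open scoped Classical
open Polynomial

/-- The `q`-integer `[m]_q = 1 + q + ⋯ + q^{m-1}`. -/
noncomputable def qint (m : ℕ) : Polynomial ℤ := ∑ i ∈ Finset.range m, X ^ i

/-- `H[μ;q] = ∏_i H_i[μ;q]`, where `H_i = [h_i(μ)]_q` on down steps and
`H_i = q^{h_i(μ)}` otherwise. -/
noncomputable def Hq {n : ℕ} (μ : Fin n → Step) : Polynomial ℤ :=
  ∏ i : Fin n, if μ i = Step.D then qint (height μ i) else X ^ height μ i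

/-- Number of inversions of `σ`. -/
def ell {n : ℕ} (σ : Equiv.Perm (Fin n)) : ℕ :=
  (Finset.univ.filter (fun p : Fin n × Fin n => p.1 < p.2 ∧ σ p.2 < σ p.1)).card

/-- Number of 2-cycles of `σ`. -/
def cyc {n : ℕ} (σ : Equiv.Perm (Fin n)) : ℕ :=
  (Finset.univ.filter (fun i : Fin n => i < σ i)).card

/-! ### Toolkit -/

lemma cardFilterSucc {n : ℕ} (p : Fin (n+1) → Prop) [DecidablePred p] :
    (univ.filter p).card
      = (univ.filter (fun i : Fin n => p i.castSucc)).card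
        + (if p (Fin.last n) then 1 else 0) := by
  rw [Finset.card_filter, Finset.card_filter, Fin.sum_univ_castSucc]

lemma cardFilterCongr {n : ℕ} {p q : Fin n → Prop} [DecidablePred p] [DecidablePred q] (h : ∀ i, p i ↔ q i) :
    (univ.filter p).card = (univ.filter q).card := by
  congr 1; apply Finset.filter_congr; intro i _; exact h i

lemma perm_sq_apply {α : Type*} {σ : Equiv.Perm α} (hσ : σ * σ = 1) (x : α) : σ (σ x) = x := by
  have := Equiv.ext_iff.mp hσ x
  simpa [Equiv.Perm.mul_apply] using this

/-! ### Path-side state sums -/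

def Ucnt {n : ℕ} (μ : Fin n → Step) (k : Fin n) : ℕ :=
  (univ.filter (fun j => j ≤ k ∧ μ j = Step.U)).card
def Dcnt {n : ℕ} (μ : Fin n → Step) (k : Fin n) : ℕ :=
  (univ.filter (fun j => j ≤ k ∧ μ j = Step.D)).card
def Dlt {n : ℕ} (μ : Fin n → Step) (k : Fin n) : ℕ :=
  (univ.filter (fun j => j < k ∧ μ j = Step.D)).card
def UT {n : ℕ} (μ : Fin n → Step) : ℕ := (univ.filter (fun j => μ j = Step.U)).card
def DT {n : ℕ} (μ : Fin n → Step) : ℕ := (univ.filter (fun j => μ j = Step.D)).card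

def Pre {n : ℕ} (μ : Fin n → Step) : Prop := ∀ k, Dcnt μ k ≤ Ucnt μ k

noncomputable def fP (n h : ℕ) : Polynomial ℤ :=
  ∑ μ ∈ univ.filter (fun μ : Fin n → Step => Pre μ ∧ UT μ = DT μ + h), Hq μ

/-! ### Involution-side state sums -/

def eStep {n : ℕ} (σ : Equiv.Perm (Fin n)) (O : Finset (Fin n)) (i : Fin n) : ℕ :=
  if σ i < i then (univ.filter (fun k => k < σ i ∧ (k ∈ O ∨ i ≤ σ k))).card
  else (univ.filter (fun k => k ≤ i ∧ (k ∈ O ∨ (k < σ k ∧ i ≤ σ k)))).card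

def Wt {n : ℕ} (σ : Equiv.Perm (Fin n)) (O : Finset (Fin n)) : ℕ := ∑ i, eStep σ O i

def POk {n : ℕ} (p : Equiv.Perm (Fin n) × Finset (Fin n)) : Prop :=
  p.1 * p.1 = 1 ∧ ∀ i ∈ p.2, p.1 i = i

noncomputable def gP (n h : ℕ) : Polynomial ℤ :=
  ∑ p ∈ univ.filter (fun p : Equiv.Perm (Fin n) × Finset (Fin n) => POk p ∧ p.2.card = h),
    (X : Polynomial ℤ) ^ Wt p.1 p.2


/-! ### snoc lemmas for the path side -/

def snocE (n : ℕ) : (Step × (Fin n → Step)) ≃ (Fin (n+1) → Step) where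
  toFun p := Fin.snoc p.2 p.1
  invFun ν := (ν (Fin.last n), fun i => ν i.castSucc)
  left_inv p := by
    refine Prod.ext ?_ ?_
    · simp
    · funext i; simp
  right_inv ν := by
    funext i
    refine Fin.lastCases ?_ ?_ i <;> simp

lemma Ucnt_castSucc {n : ℕ} (μ : Fin n → Step) (s : Step) (k : Fin n) :
    Ucnt (Fin.snoc μ s) k.castSucc = Ucnt μ k := by
  unfold Ucnt
  rw [cardFilterSucc]
  rw [if_neg (fun hc => absurd hc.1 (Fin.castSucc_lt_last k).not_ge), add_zero]
  apply cardFilterCongr; intro i; simp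

lemma Dcnt_castSucc {n : ℕ} (μ : Fin n → Step) (s : Step) (k : Fin n) :
    Dcnt (Fin.snoc μ s) k.castSucc = Dcnt μ k := by
  unfold Dcnt
  rw [cardFilterSucc]
  rw [if_neg (fun hc => absurd hc.1 (Fin.castSucc_lt_last k).not_ge), add_zero]
  apply cardFilterCongr; intro i; simp

lemma Dlt_castSucc {n : ℕ} (μ : Fin n → Step) (s : Step) (k : Fin n) :
    Dlt (Fin.snoc μ s) k.castSucc = Dlt μ k := by
  unfold Dlt
  rw [cardFilterSucc]
  rw [if_neg (fun hc => absurd hc.1 ((Fin.castSucc_lt_last k).le.not_gt)), add_zero]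
  apply cardFilterCongr; intro i; simp

lemma Ucnt_last {n : ℕ} (μ : Fin n → Step) (s : Step) :
    Ucnt (Fin.snoc μ s) (Fin.last n) = UT μ + (if s = Step.U then 1 else 0) := by
  unfold Ucnt UT
  rw [cardFilterSucc]
  congr 1
  · apply cardFilterCongr; intro i; simp [Fin.le_last]
  · simp

lemma Dcnt_last {n : ℕ} (μ : Fin n → Step) (s : Step) :
    Dcnt (Fin.snoc μ s) (Fin.last n) = DT μ + (if s = Step.D then 1 else 0) := by
  unfold Dcnt DT
  rw [cardFilterSucc]
  congr 1
  · apply cardFilterCongr; intro i; simp [Fin.le_last]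
  · simp

lemma Dlt_last {n : ℕ} (μ : Fin n → Step) (s : Step) :
    Dlt (Fin.snoc μ s) (Fin.last n) = DT μ := by
  unfold Dlt DT
  rw [cardFilterSucc]
  rw [if_neg (fun hc => absurd hc.1 (lt_irrefl _)), add_zero]
  apply cardFilterCongr; intro i; simp [Fin.castSucc_lt_last]

lemma UT_snoc {n : ℕ} (μ : Fin n → Step) (s : Step) :
    UT (Fin.snoc μ s) = UT μ + (if s = Step.U then 1 else 0) := by
  unfold UT
  rw [cardFilterSucc]
  congr 1
  · apply cardFilterCongr; intro i; simp
  · simp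

lemma DT_snoc {n : ℕ} (μ : Fin n → Step) (s : Step) :
    DT (Fin.snoc μ s) = DT μ + (if s = Step.D then 1 else 0) := by
  unfold DT
  rw [cardFilterSucc]
  congr 1
  · apply cardFilterCongr; intro i; simp
  · simp

lemma Ucnt_top {n : ℕ} (μ : Fin (n+1) → Step) : Ucnt μ (Fin.last n) = UT μ := by
  unfold Ucnt UT; apply cardFilterCongr; intro i; simp [Fin.le_last]

lemma Dcnt_top {n : ℕ} (μ : Fin (n+1) → Step) : Dcnt μ (Fin.last n) = DT μ := by
  unfold Dcnt DT; apply cardFilterCongr; intro i; simp [Fin.le_last]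

lemma DT_le_UT {n : ℕ} (μ : Fin n → Step) (hμ : Pre μ) : DT μ ≤ UT μ := by
  cases n with
  | zero => simp [UT, DT]
  | succ m =>
    have := hμ (Fin.last m)
    rwa [Ucnt_top, Dcnt_top] at this

lemma Pre_snoc {n : ℕ} (μ : Fin n → Step) (s : Step) :
    Pre (Fin.snoc μ s) ↔
      Pre μ ∧ DT μ + (if s = Step.D then 1 else 0) ≤ UT μ + (if s = Step.U then 1 else 0) := by
  constructor
  · intro hp
    constructor
    · intro k
      have := hp k.castSucc
      rwa [Ucnt_castSucc, Dcnt_castSucc] at this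
    · have := hp (Fin.last n)
      rwa [Ucnt_last, Dcnt_last] at this
  · rintro ⟨h1, h2⟩ k
    refine Fin.lastCases ?_ ?_ k
    · rw [Ucnt_last, Dcnt_last]; exact h2
    · intro i
      rw [Ucnt_castSucc, Dcnt_castSucc]
      exact h1 i

lemma height_castSucc {n : ℕ} (μ : Fin n → Step) (s : Step) (i : Fin n) :
    height (Fin.snoc μ s) i.castSucc = height μ i := by
  show Ucnt _ _ - Dlt _ _ = Ucnt _ _ - Dlt _ _
  rw [Ucnt_castSucc, Dlt_castSucc]

lemma height_last {n : ℕ} (μ : Fin n → Step) (s : Step) :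
    height (Fin.snoc μ s) (Fin.last n)
      = UT μ + (if s = Step.U then 1 else 0) - DT μ := by
  show Ucnt _ _ - Dlt _ _ = _
  rw [Ucnt_last, Dlt_last]

lemma Hq_snoc {n : ℕ} (μ : Fin n → Step) (s : Step) :
    Hq (Fin.snoc μ s) = Hq μ *
      (if s = Step.D then qint (height (Fin.snoc μ s) (Fin.last n))
        else X ^ height (Fin.snoc μ s) (Fin.last n)) := by
  unfold Hq
  rw [Fin.prod_univ_castSucc]
  simp only [Fin.snoc_last]
  congr 1
  apply Finset.prod_congr rfl
  intro i _
  rw [Fin.snoc_castSucc, height_castSucc]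

lemma stepSum {M : Type*} [AddCommMonoid M] (F : Step → M) :
    ∑ s : Step, F s = F Step.U + F Step.L + F Step.D := by
  show ∑ s ∈ (univ : Finset Step), F s = _
  rw [show (univ : Finset Step) = {Step.U, Step.L, Step.D} from rfl]
  rw [Finset.sum_insert (by decide), Finset.sum_insert (by decide), Finset.sum_singleton]
  rw [add_assoc]


/-! ### Permutation extension/restriction -/

def extPerm {n : ℕ} (σ : Equiv.Perm (Fin n)) : Equiv.Perm (Fin (n+1)) where
  toFun i := if h : i = Fin.last n then Fin.last n else (σ (i.castPred h)).castSucc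
  invFun i := if h : i = Fin.last n then Fin.last n else (σ⁻¹ (i.castPred h)).castSucc
  left_inv i := by
    dsimp only
    by_cases h : i = Fin.last n
    · simp [h]
    · rw [dif_neg h, dif_neg (Fin.castSucc_lt_last _).ne]
      simp
  right_inv i := by
    dsimp only
    by_cases h : i = Fin.last n
    · simp [h]
    · rw [dif_neg h, dif_neg (Fin.castSucc_lt_last _).ne]
      simp

@[simp] lemma extPerm_last {n : ℕ} (σ : Equiv.Perm (Fin n)) :
    extPerm σ (Fin.last n) = Fin.last n := by
  show (if h : _ then _ else _) = _
  rw [dif_pos rfl]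

@[simp] lemma extPerm_castSucc {n : ℕ} (σ : Equiv.Perm (Fin n)) (i : Fin n) :
    extPerm σ i.castSucc = (σ i).castSucc := by
  show (if h : _ then _ else _) = _
  rw [dif_neg (Fin.castSucc_lt_last _).ne]
  simp

lemma tauLast {n : ℕ} (σ : Equiv.Perm (Fin (n+1))) :
    (Equiv.swap (σ (Fin.last n)) (Fin.last n) * σ) (Fin.last n) = Fin.last n := by
  simp [Equiv.Perm.mul_apply]

lemma tauNeLast {n : ℕ} (σ : Equiv.Perm (Fin (n+1))) (i : Fin n) :
    (Equiv.swap (σ (Fin.last n)) (Fin.last n) * σ) i.castSucc ≠ Fin.last n := by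
  intro hc
  have := (Equiv.swap (σ (Fin.last n)) (Fin.last n) * σ).injective
    (hc.trans (tauLast σ).symm)
  exact (Fin.castSucc_lt_last i).ne this

def rPerm {n : ℕ} (σ : Equiv.Perm (Fin (n+1))) : Equiv.Perm (Fin n) where
  toFun i := ((Equiv.swap (σ (Fin.last n)) (Fin.last n) * σ) i.castSucc).castPred
    (tauNeLast σ i)
  invFun i := ((Equiv.swap (σ (Fin.last n)) (Fin.last n) * σ)⁻¹ i.castSucc).castPred
    (by
      intro hc
      have h1 : (Equiv.swap (σ (Fin.last n)) (Fin.last n) * σ)⁻¹ (Fin.last n) = Fin.last n := by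
        rw [Equiv.Perm.inv_eq_iff_eq, tauLast]
      have := (Equiv.swap (σ (Fin.last n)) (Fin.last n) * σ)⁻¹.injective (hc.trans h1.symm)
      exact (Fin.castSucc_lt_last i).ne this)
  left_inv i := by
    dsimp only
    apply Fin.castSucc_injective
    rw [Fin.castSucc_castPred, Fin.castSucc_castPred]
    exact Equiv.symm_apply_apply _ _
  right_inv i := by
    dsimp only
    apply Fin.castSucc_injective
    rw [Fin.castSucc_castPred, Fin.castSucc_castPred]
    exact Equiv.apply_symm_apply _ _

lemma rPerm_castSucc {n : ℕ} (σ : Equiv.Perm (Fin (n+1))) (i : Fin n) :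
    (rPerm σ i).castSucc = Equiv.swap (σ (Fin.last n)) (Fin.last n) (σ i.castSucc) := by
  have h0 : rPerm σ i
      = ((Equiv.swap (σ (Fin.last n)) (Fin.last n) * σ) i.castSucc).castPred
        (tauNeLast σ i) := rfl
  rw [h0, Fin.castSucc_castPred]
  rfl

lemma rPerm_castSucc_of_fix {n : ℕ} (σ : Equiv.Perm (Fin (n+1)))
    (hσ : σ (Fin.last n) = Fin.last n) (i : Fin n) :
    (rPerm σ i).castSucc = σ i.castSucc := by
  rw [rPerm_castSucc, hσ, Equiv.swap_self]
  rfl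

lemma rPerm_extPerm {n : ℕ} (σ : Equiv.Perm (Fin n)) : rPerm (extPerm σ) = σ := by
  apply Equiv.ext
  intro i
  apply Fin.castSucc_injective
  rw [rPerm_castSucc_of_fix _ (extPerm_last σ), extPerm_castSucc]

/-! ### rank sum lemma -/

lemma qint_succ (m : ℕ) : qint (m+1) = 1 + X * qint m := by
  unfold qint
  rw [Finset.sum_range_succ']
  simp [Finset.mul_sum, pow_succ, mul_comm, add_comm]

lemma rankSum {n : ℕ} (S : Finset (Fin n)) :
    ∑ j ∈ S, (X : Polynomial ℤ) ^ ((S.filter (· < j)).card) = qint S.card := by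
  induction S using Finset.strongInduction with
  | _ S ih =>
    rcases S.eq_empty_or_nonempty with rfl | hne
    · simp [qint]
    · obtain ⟨m, hm, hmin⟩ := S.exists_min_image id hne
      have hSm : S = insert m (S.erase m) := (Finset.insert_erase hm).symm
      rw [hSm, Finset.sum_insert (Finset.notMem_erase m S),
        Finset.card_insert_of_notMem (Finset.notMem_erase m S), qint_succ]
      have h1 : ((insert m (S.erase m)).filter (· < m)).card = 0 := by
        rw [Finset.card_eq_zero, Finset.filter_eq_empty_iff]
        intro x hx
        rcases Finset.mem_insert.mp hx with rfl | hx'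
        · exact lt_irrefl _
        · exact not_lt.mpr (hmin x (Finset.mem_of_mem_erase hx'))
      rw [h1, pow_zero]
      congr 1
      rw [← ih (S.erase m) (Finset.erase_ssubset hm), Finset.mul_sum]
      apply Finset.sum_congr rfl
      intro j hj
      have h2 : ((insert m (S.erase m)).filter (· < j)).card
          = ((S.erase m).filter (· < j)).card + 1 := by
        rw [Finset.filter_insert]
        have hmj : m < j := by
          rcases lt_or_eq_of_le (hmin j (Finset.mem_of_mem_erase hj)) with h | h
          · exact h
          · exact absurd h.symm (Finset.ne_of_mem_erase hj)
        rw [if_pos hmj, Finset.card_insert_of_notMem (fun hc => by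
          exact Finset.notMem_erase m S (Finset.mem_of_mem_filter _ hc))]
      rw [h2, pow_succ]
      ring


/-! ### open-set transport -/

def mapO {n : ℕ} (O' : Finset (Fin n)) : Finset (Fin (n+1)) :=
  O'.map Fin.castSuccEmb

def backO {n : ℕ} (O : Finset (Fin (n+1))) : Finset (Fin n) :=
  univ.filter (fun m => m.castSucc ∈ O)

lemma mem_mapO {n : ℕ} (O' : Finset (Fin n)) (k : Fin n) :
    k.castSucc ∈ mapO O' ↔ k ∈ O' := by
  rw [mapO, show k.castSucc = Fin.castSuccEmb k from rfl, Finset.mem_map']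

lemma last_not_mem_mapO {n : ℕ} (O' : Finset (Fin n)) : Fin.last n ∉ mapO O' := by
  intro hc
  obtain ⟨a, _, ha⟩ := Finset.mem_map.mp hc
  exact (Fin.castSucc_lt_last a).ne ha

lemma card_mapO {n : ℕ} (O' : Finset (Fin n)) : (mapO O').card = O'.card :=
  Finset.card_map _

lemma backO_mapO {n : ℕ} (O' : Finset (Fin n)) : backO (mapO O') = O' := by
  ext m; simp [backO, mem_mapO]

lemma mapO_backO {n : ℕ} (O : Finset (Fin (n+1))) (hl : Fin.last n ∉ O) :
    mapO (backO O) = O := by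
  ext x
  refine Fin.lastCases ?_ ?_ x
  · simp [last_not_mem_mapO, hl]
  · intro i; simp [mem_mapO, backO]

lemma backO_insert_last {n : ℕ} (O : Finset (Fin (n+1))) :
    backO (insert (Fin.last n) O) = backO O := by
  ext m; simp [backO, (Fin.castSucc_lt_last m).ne]

/-! ### e-statistic transfer: L/U cases (extension fixing `last`) -/

lemma eStep_ext_cast {n : ℕ} (σ' : Equiv.Perm (Fin n)) (O : Finset (Fin (n+1)))
    (O' : Finset (Fin n)) (hO : ∀ k : Fin n, k.castSucc ∈ O ↔ k ∈ O') (i : Fin n) :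
    eStep (extPerm σ') O i.castSucc = eStep σ' O' i := by
  unfold eStep
  have hb : extPerm σ' i.castSucc < i.castSucc ↔ σ' i < i := by
    simp only [extPerm_castSucc, Fin.castSucc_lt_castSucc_iff]
  by_cases hD : σ' i < i
  · rw [if_pos (hb.mpr hD), if_pos hD, cardFilterSucc]
    rw [if_neg (fun hc => by
      rw [extPerm_castSucc] at hc
      exact (Fin.castSucc_lt_last _).le.not_gt hc.1), add_zero]
    apply cardFilterCongr
    intro k
    rw [extPerm_castSucc, extPerm_castSucc, Fin.castSucc_lt_castSucc_iff,
      Fin.castSucc_le_castSucc_iff, hO k]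
  · rw [if_neg (fun hc => hD (hb.mp hc)), if_neg hD, cardFilterSucc]
    rw [if_neg (fun hc => (Fin.castSucc_lt_last i).not_ge hc.1), add_zero]
    apply cardFilterCongr
    intro k
    rw [extPerm_castSucc, Fin.castSucc_le_castSucc_iff, Fin.castSucc_lt_castSucc_iff,
      Fin.castSucc_le_castSucc_iff, hO k]

lemma eStep_ext_last_L {n : ℕ} (σ' : Equiv.Perm (Fin n)) (O' : Finset (Fin n)) :
    eStep (extPerm σ') (mapO O') (Fin.last n) = O'.card := by
  unfold eStep
  rw [if_neg (fun hc => by rw [extPerm_last] at hc; exact lt_irrefl _ hc)]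
  rw [cardFilterSucc]
  rw [if_neg (fun hc => by
    rw [extPerm_last] at hc
    rcases hc.2 with h | h
    · exact last_not_mem_mapO O' h
    · exact lt_irrefl _ h.1), add_zero]
  rw [show O'.card = (univ.filter (fun k : Fin n => k ∈ O')).card by
    rw [Finset.filter_mem_eq_inter, Finset.univ_inter]]
  apply cardFilterCongr
  intro k
  rw [extPerm_castSucc]
  constructor
  · rintro ⟨-, h | h⟩
    · exact (mem_mapO O' k).mp h
    · exact absurd h.2 (Fin.castSucc_lt_last _).not_ge
  · intro h
    exact ⟨Fin.le_last _, Or.inl ((mem_mapO O' k).mpr h)⟩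

lemma eStep_ext_last_U {n : ℕ} (σ' : Equiv.Perm (Fin n)) (O' : Finset (Fin n)) :
    eStep (extPerm σ') (insert (Fin.last n) (mapO O')) (Fin.last n) = O'.card + 1 := by
  unfold eStep
  rw [if_neg (fun hc => by rw [extPerm_last] at hc; exact lt_irrefl _ hc)]
  rw [cardFilterSucc]
  rw [if_pos ⟨le_refl _, Or.inl (Finset.mem_insert_self _ _)⟩]
  congr 1
  rw [show O'.card = (univ.filter (fun k : Fin n => k ∈ O')).card by
    rw [Finset.filter_mem_eq_inter, Finset.univ_inter]]
  apply cardFilterCongr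
  intro k
  rw [extPerm_castSucc]
  constructor
  · rintro ⟨-, h | h⟩
    · rcases Finset.mem_insert.mp h with h' | h'
      · exact absurd h' (Fin.castSucc_lt_last k).ne
      · exact (mem_mapO O' k).mp h'
    · exact absurd h.2 (Fin.castSucc_lt_last _).not_ge
  · intro h
    exact ⟨Fin.le_last _, Or.inl (Finset.mem_insert_of_mem ((mem_mapO O' k).mpr h))⟩

lemma Wt_ext_L {n : ℕ} (σ' : Equiv.Perm (Fin n)) (O' : Finset (Fin n)) :
    Wt (extPerm σ') (mapO O') = Wt σ' O' + O'.card := by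
  unfold Wt
  rw [Fin.sum_univ_castSucc, eStep_ext_last_L]
  congr 1
  apply Finset.sum_congr rfl
  intro i _
  exact eStep_ext_cast σ' _ O' (fun k => mem_mapO O' k) i

lemma Wt_ext_U {n : ℕ} (σ' : Equiv.Perm (Fin n)) (O' : Finset (Fin n)) :
    Wt (extPerm σ') (insert (Fin.last n) (mapO O')) = Wt σ' O' + O'.card + 1 := by
  unfold Wt
  rw [Fin.sum_univ_castSucc, eStep_ext_last_U]
  rw [← add_assoc]
  congr 2
  apply Finset.sum_congr rfl
  intro i _
  refine eStep_ext_cast σ' _ O' (fun k => ?_) i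
  rw [Finset.mem_insert, mem_mapO]
  exact ⟨fun h => h.resolve_left (Fin.castSucc_lt_last k).ne, Or.inr⟩


/-! ### e-statistic transfer: D case -/

def dPerm {n : ℕ} (σ' : Equiv.Perm (Fin n)) (j : Fin n) : Equiv.Perm (Fin (n+1)) :=
  Equiv.swap j.castSucc (Fin.last n) * extPerm σ'

lemma dPerm_apply_j {n : ℕ} (σ' : Equiv.Perm (Fin n)) {j : Fin n} (hfix : σ' j = j) :
    dPerm σ' j j.castSucc = Fin.last n := by
  show Equiv.swap j.castSucc (Fin.last n) (extPerm σ' j.castSucc) = _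
  rw [extPerm_castSucc, hfix, Equiv.swap_apply_left]

lemma dPerm_last {n : ℕ} (σ' : Equiv.Perm (Fin n)) (j : Fin n) :
    dPerm σ' j (Fin.last n) = j.castSucc := by
  show Equiv.swap j.castSucc (Fin.last n) (extPerm σ' (Fin.last n)) = _
  rw [extPerm_last, Equiv.swap_apply_right]

lemma dPerm_apply_ne {n : ℕ} (σ' : Equiv.Perm (Fin n)) {j : Fin n} (hfix : σ' j = j)
    {m : Fin n} (hm : m ≠ j) : dPerm σ' j m.castSucc = (σ' m).castSucc := by
  show Equiv.swap j.castSucc (Fin.last n) (extPerm σ' m.castSucc) = _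
  rw [extPerm_castSucc]
  apply Equiv.swap_apply_of_ne_of_ne
  · intro hc
    exact hm (σ'.injective ((Fin.castSucc_injective n hc).trans hfix.symm))
  · exact (Fin.castSucc_lt_last _).ne

lemma eStep_d_cast {n : ℕ} (σ' : Equiv.Perm (Fin n)) {j : Fin n} (hfix : σ' j = j)
    {O' : Finset (Fin n)} (hjO : j ∈ O') (i : Fin n) :
    eStep (dPerm σ' j) (mapO (O'.erase j)) i.castSucc = eStep σ' O' i := by
  have hmemO : ∀ m : Fin n, m.castSucc ∈ mapO (O'.erase j) ↔ (m ∈ O' ∧ m ≠ j) := by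
    intro m
    rw [mem_mapO, Finset.mem_erase, and_comm]
  by_cases hij : i = j
  · subst hij
    unfold eStep
    rw [if_neg (by rw [dPerm_apply_j σ' hfix]; exact (Fin.castSucc_lt_last i).asymm),
      if_neg (by rw [hfix]; exact lt_irrefl i)]
    rw [cardFilterSucc, if_neg (fun hc => (Fin.castSucc_lt_last i).not_ge hc.1), add_zero]
    apply cardFilterCongr
    intro m
    rw [Fin.castSucc_le_castSucc_iff, hmemO m]
    by_cases hmj : m = i
    · subst hmj
      simp only [le_refl, true_and]
      constructor
      · intro _; exact Or.inl hjO
      · intro _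
        refine Or.inr ⟨?_, ?_⟩
        · rw [dPerm_apply_j σ' hfix]; exact Fin.castSucc_lt_last m
        · rw [dPerm_apply_j σ' hfix]; exact Fin.le_last _
    · rw [dPerm_apply_ne σ' hfix hmj, Fin.castSucc_lt_castSucc_iff,
        Fin.castSucc_le_castSucc_iff]
      constructor
      · rintro ⟨h1, h2 | h3⟩
        · exact ⟨h1, Or.inl h2.1⟩
        · exact ⟨h1, Or.inr h3⟩
      · rintro ⟨h1, h2 | h3⟩
        · exact ⟨h1, Or.inl ⟨h2, hmj⟩⟩
        · exact ⟨h1, Or.inr h3⟩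
  · have happ : dPerm σ' j i.castSucc = (σ' i).castSucc := dPerm_apply_ne σ' hfix hij
    unfold eStep
    by_cases hD : σ' i < i
    · rw [if_pos (by rw [happ]; exact Fin.castSucc_lt_castSucc_iff.mpr hD), if_pos hD]
      rw [cardFilterSucc, if_neg (fun hc => by
        rw [happ] at hc
        exact (Fin.castSucc_lt_last _).le.not_gt hc.1), add_zero]
      apply cardFilterCongr
      intro m
      rw [happ, Fin.castSucc_lt_castSucc_iff, hmemO m]
      by_cases hmj : m = j
      · subst hmj
        constructor
        · rintro ⟨h1, -⟩; exact ⟨h1, Or.inl hjO⟩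
        · rintro ⟨h1, -⟩
          refine ⟨h1, Or.inr ?_⟩
          rw [dPerm_apply_j σ' hfix]; exact Fin.le_last _
      · rw [dPerm_apply_ne σ' hfix hmj, Fin.castSucc_le_castSucc_iff]
        constructor
        · rintro ⟨h1, h2 | h3⟩
          · exact ⟨h1, Or.inl h2.1⟩
          · exact ⟨h1, Or.inr h3⟩
        · rintro ⟨h1, h2 | h3⟩
          · exact ⟨h1, Or.inl ⟨h2, hmj⟩⟩
          · exact ⟨h1, Or.inr h3⟩
    · rw [if_neg (by rw [happ]; exact fun hc => hD (Fin.castSucc_lt_castSucc_iff.mp hc)),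
        if_neg hD]
      rw [cardFilterSucc, if_neg (fun hc => (Fin.castSucc_lt_last i).not_ge hc.1), add_zero]
      apply cardFilterCongr
      intro m
      rw [Fin.castSucc_le_castSucc_iff, hmemO m]
      by_cases hmj : m = j
      · subst hmj
        constructor
        · rintro ⟨h1, -⟩; exact ⟨h1, Or.inl hjO⟩
        · rintro ⟨h1, -⟩
          refine ⟨h1, Or.inr ⟨?_, ?_⟩⟩
          · rw [dPerm_apply_j σ' hfix]; exact Fin.castSucc_lt_last m
          · rw [dPerm_apply_j σ' hfix]; exact Fin.le_last _
      · rw [dPerm_apply_ne σ' hfix hmj, Fin.castSucc_lt_castSucc_iff,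
          Fin.castSucc_le_castSucc_iff]
        constructor
        · rintro ⟨h1, h2 | h3⟩
          · exact ⟨h1, Or.inl h2.1⟩
          · exact ⟨h1, Or.inr h3⟩
        · rintro ⟨h1, h2 | h3⟩
          · exact ⟨h1, Or.inl ⟨h2, hmj⟩⟩
          · exact ⟨h1, Or.inr h3⟩

lemma eStep_d_last {n : ℕ} (σ' : Equiv.Perm (Fin n)) {j : Fin n} (hfix : σ' j = j)
    (O' : Finset (Fin n)) :
    eStep (dPerm σ' j) (mapO (O'.erase j)) (Fin.last n) = (O'.filter (· < j)).card := by
  unfold eStep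
  rw [if_pos (by rw [dPerm_last]; exact Fin.castSucc_lt_last j)]
  rw [cardFilterSucc, if_neg (fun hc => by
    rw [dPerm_last] at hc
    exact (Fin.castSucc_lt_last j).asymm hc.1), add_zero]
  rw [show (O'.filter (· < j)).card
      = (univ.filter (fun m : Fin n => m < j ∧ m ∈ O')).card by
    congr 1
    ext m
    simp [and_comm]]
  apply cardFilterCongr
  intro m
  rw [dPerm_last, Fin.castSucc_lt_castSucc_iff]
  constructor
  · rintro ⟨h1, h2 | h3⟩
    · exact ⟨h1, (Finset.mem_erase.mp ((mem_mapO _ m).mp h2)).2⟩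
    · exfalso
      have hmj : m ≠ j := fun hc => absurd (hc ▸ h1) (lt_irrefl j)
      rw [dPerm_apply_ne σ' hfix hmj] at h3
      exact (Fin.castSucc_lt_last _).not_ge h3
  · rintro ⟨h1, h2⟩
    refine ⟨h1, Or.inl ?_⟩
    rw [mem_mapO, Finset.mem_erase]
    exact ⟨fun hc => absurd (hc ▸ h1) (lt_irrefl j), h2⟩

lemma Wt_ext_D {n : ℕ} (σ' : Equiv.Perm (Fin n)) {j : Fin n} (hfix : σ' j = j)
    {O' : Finset (Fin n)} (hjO : j ∈ O') :
    Wt (dPerm σ' j) (mapO (O'.erase j)) = Wt σ' O' + (O'.filter (· < j)).card := by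
  unfold Wt
  rw [Fin.sum_univ_castSucc, eStep_d_last σ' hfix]
  congr 1
  apply Finset.sum_congr rfl
  intro i _
  exact eStep_d_cast σ' hfix hjO i


/-! ### Toward 2W = ell + cyc -/

lemma ell_sum {n : ℕ} (σ : Equiv.Perm (Fin n)) :
    ell σ = ∑ a : Fin n, ∑ b : Fin n, (if a < b ∧ σ b < σ a then 1 else 0) := by
  rw [ell, Finset.card_filter, Fintype.sum_prod_type]

lemma cyc_sum {n : ℕ} (σ : Equiv.Perm (Fin n)) :
    cyc σ = ∑ i : Fin n, (if i < σ i then 1 else 0) := by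
  rw [cyc, Finset.card_filter]

lemma ell_extPerm {n : ℕ} (σ' : Equiv.Perm (Fin n)) : ell (extPerm σ') = ell σ' := by
  rw [ell_sum, ell_sum σ', Fin.sum_univ_castSucc]
  have hlast : ∑ b : Fin (n+1),
      (if Fin.last n < b ∧ extPerm σ' b < extPerm σ' (Fin.last n) then 1 else 0) = 0 := by
    apply Finset.sum_eq_zero
    intro b _
    rw [if_neg (fun hc => (Fin.le_last b).not_gt hc.1)]
  rw [hlast, add_zero]
  apply Finset.sum_congr rfl
  intro i _
  rw [Fin.sum_univ_castSucc]
  have hl2 : (if i.castSucc < Fin.last n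
      ∧ extPerm σ' (Fin.last n) < extPerm σ' i.castSucc then 1 else 0) = 0 := by
    rw [if_neg]
    rintro ⟨-, hc⟩
    rw [extPerm_last, extPerm_castSucc] at hc
    exact (Fin.le_last _).not_gt hc
  rw [hl2, add_zero]
  apply Finset.sum_congr rfl
  intro k _
  simp only [extPerm_castSucc, Fin.castSucc_lt_castSucc_iff]

lemma cyc_extPerm {n : ℕ} (σ' : Equiv.Perm (Fin n)) : cyc (extPerm σ') = cyc σ' := by
  rw [cyc_sum, cyc_sum σ', Fin.sum_univ_castSucc]
  rw [show (if Fin.last n < extPerm σ' (Fin.last n) then 1 else 0) = 0 by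
    rw [extPerm_last, if_neg (lt_irrefl _)], add_zero]
  apply Finset.sum_congr rfl
  intro i _
  simp only [extPerm_castSucc, Fin.castSucc_lt_castSucc_iff]

lemma card_nbij_invol {n : ℕ} (σ' : Equiv.Perm (Fin n)) (hσ' : σ' * σ' = 1)
    (p q : Fin n → Prop) [DecidablePred p] [DecidablePred q]
    (hpq : ∀ i, p i → q (σ' i)) (hqp : ∀ i, q i → p (σ' i)) :
    (univ.filter p).card = (univ.filter q).card := by
  apply Finset.card_nbij' (fun i => σ' i) (fun i => σ' i)
  · intro i hi
    rw [Finset.mem_coe, Finset.mem_filter] at hi ⊢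
    exact ⟨Finset.mem_univ _, hpq i hi.2⟩
  · intro i hi
    rw [Finset.mem_coe, Finset.mem_filter] at hi ⊢
    exact ⟨Finset.mem_univ _, hqp i hi.2⟩
  · intro i _
    exact perm_sq_apply hσ' i
  · intro i _
    exact perm_sq_apply hσ' i

lemma eStep_singleton {n : ℕ} (σ' : Equiv.Perm (Fin n)) {j0 : Fin n} (hj : σ' j0 = j0)
    (i : Fin n) :
    eStep σ' {j0} i = eStep σ' ∅ i
      + (if (¬ σ' i < i ∧ j0 ≤ i) ∨ (σ' i < i ∧ j0 < σ' i) then 1 else 0) := by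
  unfold eStep
  by_cases hD : σ' i < i
  · rw [if_pos hD, if_pos hD]
    by_cases hc : j0 < σ' i
    · rw [if_pos (Or.inr ⟨hD, hc⟩)]
      have hset : univ.filter (fun k => k < σ' i ∧ (k ∈ ({j0} : Finset (Fin n)) ∨ i ≤ σ' k))
          = insert j0 (univ.filter
            (fun k => k < σ' i ∧ (k ∈ (∅ : Finset (Fin n)) ∨ i ≤ σ' k))) := by
        ext k
        simp only [Finset.mem_filter, Finset.mem_univ, true_and, Finset.mem_insert,
          Finset.mem_singleton, Finset.notMem_empty, false_or]
        constructor
        · rintro ⟨h1, rfl | h2⟩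
          · exact Or.inl rfl
          · exact Or.inr ⟨h1, h2⟩
        · rintro (rfl | ⟨h1, h2⟩)
          · exact ⟨hc, Or.inl rfl⟩
          · exact ⟨h1, Or.inr h2⟩
      rw [hset, Finset.card_insert_of_notMem]
      simp only [Finset.mem_filter, Finset.mem_univ, true_and, Finset.notMem_empty, false_or]
      rintro ⟨-, h2⟩
      rw [hj] at h2
      exact absurd (lt_trans hc hD) (not_lt.mpr h2)
    · rw [if_neg (by
        rintro (⟨hnd, -⟩ | ⟨-, hc'⟩)
        · exact hnd hD
        · exact hc hc'), add_zero]
      apply cardFilterCongr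
      intro k
      simp only [Finset.mem_singleton, Finset.notMem_empty, false_or]
      constructor
      · rintro ⟨h1, rfl | h2⟩
        · exact absurd h1 hc
        · exact ⟨h1, h2⟩
      · rintro ⟨h1, h2⟩
        exact ⟨h1, Or.inr h2⟩
  · rw [if_neg hD, if_neg hD]
    by_cases hc : j0 ≤ i
    · rw [if_pos (Or.inl ⟨hD, hc⟩)]
      have hset : univ.filter (fun k => k ≤ i ∧ (k ∈ ({j0} : Finset (Fin n))
            ∨ (k < σ' k ∧ i ≤ σ' k)))
          = insert j0 (univ.filter (fun k => k ≤ i ∧ (k ∈ (∅ : Finset (Fin n))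
            ∨ (k < σ' k ∧ i ≤ σ' k)))) := by
        ext k
        simp only [Finset.mem_filter, Finset.mem_univ, true_and, Finset.mem_insert,
          Finset.mem_singleton, Finset.notMem_empty, false_or]
        constructor
        · rintro ⟨h1, rfl | h2⟩
          · exact Or.inl rfl
          · exact Or.inr ⟨h1, h2⟩
        · rintro (rfl | ⟨h1, h2⟩)
          · exact ⟨hc, Or.inl rfl⟩
          · exact ⟨h1, Or.inr h2⟩
      rw [hset, Finset.card_insert_of_notMem]
      simp only [Finset.mem_filter, Finset.mem_univ, true_and, Finset.notMem_empty, false_or]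
      rintro ⟨-, h2, -⟩
      rw [hj] at h2
      exact lt_irrefl _ h2
    · rw [if_neg (by
        rintro (⟨-, hc'⟩ | ⟨hd', -⟩)
        · exact hc hc'
        · exact hD hd'), add_zero]
      apply cardFilterCongr
      intro k
      simp only [Finset.mem_singleton, Finset.notMem_empty, false_or]
      constructor
      · rintro ⟨h1, rfl | h2⟩
        · exact absurd h1 hc
        · exact ⟨h1, h2⟩
      · rintro ⟨h1, h2⟩
        exact ⟨h1, Or.inr h2⟩

lemma Wt_singleton {n : ℕ} (σ' : Equiv.Perm (Fin n)) {j0 : Fin n} (hj : σ' j0 = j0) :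
    Wt σ' {j0} = Wt σ' ∅ + (univ.filter (fun i : Fin n =>
      (¬ σ' i < i ∧ j0 ≤ i) ∨ (σ' i < i ∧ j0 < σ' i))).card := by
  unfold Wt
  rw [Finset.card_filter, ← Finset.sum_add_distrib]
  apply Finset.sum_congr rfl
  intro i _
  exact eStep_singleton σ' hj i

/-! ### Base cases -/

lemma fP_zero (h : ℕ) : fP 0 h = if h = 0 then 1 else 0 := by
  unfold fP
  rcases eq_or_ne h 0 with rfl | hp
  · rw [if_pos rfl]
    rw [Finset.filter_true_of_mem (fun μ _ => ⟨fun k => k.elim0, by simp [UT, DT]⟩)]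
    rw [Fintype.sum_unique]
    simp [Hq]
  · rw [if_neg hp]
    apply Finset.sum_eq_zero
    intro μ hμ
    simp only [Finset.mem_filter] at hμ
    exfalso
    apply hp
    have h1 : UT μ = 0 := by simp [UT]
    have h2 : DT μ = 0 := by simp [DT]
    omega

lemma gP_zero (h : ℕ) : gP 0 h = if h = 0 then 1 else 0 := by
  unfold gP
  rcases eq_or_ne h 0 with rfl | hp
  · rw [if_pos rfl]
    have hf : (univ.filter (fun p : Equiv.Perm (Fin 0) × Finset (Fin 0) =>
        POk p ∧ p.2.card = 0)) = {(1, ∅)} := by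
      apply Finset.eq_singleton_iff_unique_mem.mpr
      constructor
      · simp only [Finset.mem_filter, Finset.mem_univ, true_and]
        exact ⟨⟨rfl, fun i hi => i.elim0⟩, rfl⟩
      · intro p _
        have h1 : p.1 = 1 := Equiv.ext (fun x => x.elim0)
        have h2 : p.2 = ∅ := Finset.eq_empty_of_forall_notMem (fun x => x.elim0)
        exact Prod.ext h1 h2
    rw [hf, Finset.sum_singleton]
    simp [Wt]
  · rw [if_neg hp]
    apply Finset.sum_eq_zero
    intro p hp2
    simp only [Finset.mem_filter] at hp2
    exfalso
    apply hp
    have : p.2 = ∅ := Finset.eq_empty_of_forall_notMem (fun x => x.elim0)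
    rw [← hp2.2.2, this, Finset.card_empty]

/-! ### Recursions -/

lemma fP_rec (n h : ℕ) :
    fP (n+1) h = X ^ h * fP n h + (if h = 0 then 0 else X ^ h * fP n (h-1))
      + qint (h+1) * fP n (h+1) := by
  have key : fP (n+1) h = ∑ s : Step, ∑ μ : Fin n → Step,
      (if Pre (Fin.snoc μ s) ∧ UT (Fin.snoc μ s) = DT (Fin.snoc μ s) + h
       then Hq (Fin.snoc μ s) else 0) := by
    rw [fP, Finset.sum_filter,
      ← Equiv.sum_comp (snocE n) (fun ν => if Pre ν ∧ UT ν = DT ν + h then Hq ν else 0),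
      Fintype.sum_prod_type]
    rfl
  rw [key, stepSum]
  have hL : (∑ μ : Fin n → Step,
      (if Pre (Fin.snoc μ Step.L) ∧ UT (Fin.snoc μ Step.L) = DT (Fin.snoc μ Step.L) + h
       then Hq (Fin.snoc μ Step.L) else 0)) = X ^ h * fP n h := by
    rw [fP, Finset.mul_sum, Finset.sum_filter]
    apply Finset.sum_congr rfl
    intro μ _
    rw [Pre_snoc, UT_snoc, DT_snoc]
    simp only [reduceCtorEq, reduceIte, if_false, add_zero]
    by_cases hB : Pre μ ∧ UT μ = DT μ + h
    · rw [if_pos ⟨⟨hB.1, by omega⟩, by omega⟩, if_pos hB]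
      rw [Hq_snoc]
      simp only [reduceCtorEq, reduceIte, if_false]
      rw [height_last]
      simp only [reduceCtorEq, reduceIte, if_false, add_zero]
      rw [show UT μ - DT μ = h by omega, mul_comm]
    · rw [if_neg (fun hc => hB ⟨hc.1.1, by omega⟩), if_neg hB]
  have hU : (∑ μ : Fin n → Step,
      (if Pre (Fin.snoc μ Step.U) ∧ UT (Fin.snoc μ Step.U) = DT (Fin.snoc μ Step.U) + h
       then Hq (Fin.snoc μ Step.U) else 0)) = (if h = 0 then 0 else X ^ h * fP n (h-1)) := by
    by_cases h0 : h = 0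
    · subst h0
      rw [if_pos rfl]
      apply Finset.sum_eq_zero
      intro μ _
      rw [if_neg]
      rintro ⟨hp, he⟩
      rw [Pre_snoc] at hp
      rw [UT_snoc, DT_snoc] at he
      have := DT_le_UT μ hp.1
      simp only [reduceCtorEq, reduceIte, if_false] at he
      omega
    · rw [if_neg h0]
      obtain ⟨h', rfl⟩ : ∃ h', h = h' + 1 := ⟨h - 1, by omega⟩
      simp only [Nat.add_sub_cancel]
      rw [fP, Finset.mul_sum, Finset.sum_filter]
      apply Finset.sum_congr rfl
      intro μ _
      rw [Pre_snoc, UT_snoc, DT_snoc]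
      simp only [reduceCtorEq, reduceIte, if_false, add_zero]
      by_cases hB : Pre μ ∧ UT μ = DT μ + h'
      · rw [if_pos ⟨⟨hB.1, by omega⟩, by omega⟩, if_pos hB]
        rw [Hq_snoc]
        simp only [reduceCtorEq, reduceIte, if_false]
        rw [height_last]
        simp only [reduceIte]
        rw [show UT μ + 1 - DT μ = h' + 1 by omega, mul_comm]
      · rw [if_neg (fun hc => hB ⟨hc.1.1, by omega⟩), if_neg hB]
  have hD : (∑ μ : Fin n → Step,
      (if Pre (Fin.snoc μ Step.D) ∧ UT (Fin.snoc μ Step.D) = DT (Fin.snoc μ Step.D) + h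
       then Hq (Fin.snoc μ Step.D) else 0)) = qint (h+1) * fP n (h+1) := by
    rw [fP, Finset.mul_sum, Finset.sum_filter]
    apply Finset.sum_congr rfl
    intro μ _
    rw [Pre_snoc, UT_snoc, DT_snoc]
    simp only [reduceCtorEq, reduceIte, if_false, add_zero]
    by_cases hB : Pre μ ∧ UT μ = DT μ + (h+1)
    · rw [if_pos ⟨⟨hB.1, by omega⟩, by omega⟩, if_pos hB]
      rw [Hq_snoc]
      simp only [reduceIte]
      rw [height_last]
      simp only [reduceCtorEq, reduceIte, if_false, add_zero]
      rw [show UT μ - DT μ = h + 1 by omega, mul_comm]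
    · rw [if_neg (fun hc => hB ⟨hc.1.1, by omega⟩), if_neg hB]
  rw [hL, hU, hD]
  ring

/-! ### involution transport -/

lemma mem_backO {n : ℕ} (O : Finset (Fin (n+1))) (m : Fin n) :
    m ∈ backO O ↔ m.castSucc ∈ O := by simp [backO]

lemma insert_last_mapO_backO {n : ℕ} (O : Finset (Fin (n+1))) (hl : Fin.last n ∈ O) :
    insert (Fin.last n) (mapO (backO O)) = O := by
  ext x
  refine Fin.lastCases ?_ ?_ x
  · simp [hl]
  · intro m
    rw [Finset.mem_insert]
    simp [mem_mapO, mem_backO, (Fin.castSucc_lt_last m).ne]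

lemma card_backO {n : ℕ} (O : Finset (Fin (n+1))) (hl : Fin.last n ∉ O) :
    (backO O).card = O.card := by
  have := congrArg Finset.card (mapO_backO O hl)
  rwa [card_mapO] at this

lemma card_backO_mem {n : ℕ} (O : Finset (Fin (n+1))) (hl : Fin.last n ∈ O) :
    O.card = (backO O).card + 1 := by
  have h2 := Finset.card_insert_of_notMem (last_not_mem_mapO (backO O))
  rw [insert_last_mapO_backO O hl, card_mapO] at h2
  exact h2

lemma extPerm_invol {n : ℕ} {σ' : Equiv.Perm (Fin n)} (h : σ' * σ' = 1) :
    extPerm σ' * extPerm σ' = 1 := by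
  apply Equiv.ext
  intro x
  rw [Equiv.Perm.mul_apply, Equiv.Perm.one_apply]
  refine Fin.lastCases ?_ ?_ x
  · rw [extPerm_last, extPerm_last]
  · intro i
    rw [extPerm_castSucc, extPerm_castSucc, perm_sq_apply h]

lemma dPerm_invol {n : ℕ} {σ' : Equiv.Perm (Fin n)} {j : Fin n} (h : σ' * σ' = 1)
    (hj : σ' j = j) : dPerm σ' j * dPerm σ' j = 1 := by
  apply Equiv.ext
  intro x
  rw [Equiv.Perm.mul_apply, Equiv.Perm.one_apply]
  refine Fin.lastCases ?_ ?_ x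
  · rw [dPerm_last, dPerm_apply_j σ' hj]
  · intro i
    by_cases hij : i = j
    · subst hij
      rw [dPerm_apply_j σ' hj, dPerm_last]
    · rw [dPerm_apply_ne σ' hj hij,
        dPerm_apply_ne σ' hj (fun hc => hij (by rw [← perm_sq_apply h i, hc, hj])),
        perm_sq_apply h]

lemma tau_invol {n : ℕ} (σ : Equiv.Perm (Fin (n+1))) (hσ : σ * σ = 1) :
    (Equiv.swap (σ (Fin.last n)) (Fin.last n) * σ)
      * (Equiv.swap (σ (Fin.last n)) (Fin.last n) * σ) = 1 := by
  apply Equiv.ext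
  intro x
  rw [Equiv.Perm.mul_apply, Equiv.Perm.mul_apply, Equiv.Perm.mul_apply, Equiv.Perm.one_apply]
  by_cases h1 : σ x = σ (Fin.last n)
  · have hx : x = Fin.last n := σ.injective h1
    subst hx
    rw [Equiv.swap_apply_left, Equiv.swap_apply_left]
  · by_cases h2 : σ x = Fin.last n
    · have hx : x = σ (Fin.last n) := by rw [← perm_sq_apply hσ x, h2]
      rw [h2, Equiv.swap_apply_right, perm_sq_apply hσ, Equiv.swap_apply_right, hx]
    · rw [Equiv.swap_apply_of_ne_of_ne h1 h2, perm_sq_apply hσ]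
      apply Equiv.swap_apply_of_ne_of_ne
      · intro hc
        exact h2 (by rw [hc, perm_sq_apply hσ])
      · intro hc
        exact h1 (by rw [hc])

lemma rPerm_invol {n : ℕ} {σ : Equiv.Perm (Fin (n+1))} (hσ : σ * σ = 1) :
    rPerm σ * rPerm σ = 1 := by
  apply Equiv.ext
  intro i
  rw [Equiv.Perm.mul_apply, Equiv.Perm.one_apply]
  apply Fin.castSucc_injective
  rw [rPerm_castSucc, rPerm_castSucc]
  have := perm_sq_apply (tau_invol σ hσ) i.castSucc
  simpa [Equiv.Perm.mul_apply] using this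

lemma rPerm_fix {n : ℕ} {σ : Equiv.Perm (Fin (n+1))} (hσ : σ * σ = 1) {m : Fin n}
    (hm : σ m.castSucc = m.castSucc) : rPerm σ m = m := by
  apply Fin.castSucc_injective
  rw [rPerm_castSucc, hm]
  apply Equiv.swap_apply_of_ne_of_ne
  · intro hc
    have h2 : σ m.castSucc = Fin.last n := by rw [hc, perm_sq_apply hσ]
    rw [hm] at h2
    exact (Fin.castSucc_lt_last m).ne h2
  · exact (Fin.castSucc_lt_last m).ne

lemma rPerm_fix_j {n : ℕ} {σ : Equiv.Perm (Fin (n+1))} (hσ : σ * σ = 1)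
    (hnl : σ (Fin.last n) ≠ Fin.last n) :
    rPerm σ ((σ (Fin.last n)).castPred hnl) = (σ (Fin.last n)).castPred hnl := by
  apply Fin.castSucc_injective
  rw [rPerm_castSucc, Fin.castSucc_castPred, perm_sq_apply hσ, Equiv.swap_apply_right]

lemma extPerm_rPerm {n : ℕ} {σ : Equiv.Perm (Fin (n+1))} (hl : σ (Fin.last n) = Fin.last n) :
    extPerm (rPerm σ) = σ := by
  apply Equiv.ext
  intro x
  refine Fin.lastCases ?_ ?_ x
  · rw [extPerm_last, hl]
  · intro i
    rw [extPerm_castSucc, rPerm_castSucc_of_fix σ hl]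

lemma dPerm_rPerm {n : ℕ} {σ : Equiv.Perm (Fin (n+1))} (hσ : σ * σ = 1)
    (hnl : σ (Fin.last n) ≠ Fin.last n) :
    dPerm (rPerm σ) ((σ (Fin.last n)).castPred hnl) = σ := by
  apply Equiv.ext
  intro x
  refine Fin.lastCases ?_ ?_ x
  · rw [dPerm_last, Fin.castSucc_castPred]
  · intro i
    by_cases hij : i = (σ (Fin.last n)).castPred hnl
    · rw [hij, dPerm_apply_j _ (rPerm_fix_j hσ hnl), Fin.castSucc_castPred,
        perm_sq_apply hσ]
    · rw [dPerm_apply_ne _ (rPerm_fix_j hσ hnl) hij, rPerm_castSucc]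
      apply Equiv.swap_apply_of_ne_of_ne
      · intro hc
        exact (Fin.castSucc_lt_last i).ne (σ.injective hc)
      · intro hc
        apply hij
        apply Fin.castSucc_injective
        rw [Fin.castSucc_castPred, ← perm_sq_apply hσ i.castSucc, hc]

lemma rPerm_dPerm {n : ℕ} (σ' : Equiv.Perm (Fin n)) {j : Fin n} (hj : σ' j = j) :
    rPerm (dPerm σ' j) = σ' := by
  apply Equiv.ext
  intro i
  apply Fin.castSucc_injective
  rw [rPerm_castSucc, dPerm_last]
  show Equiv.swap j.castSucc (Fin.last n)
      (Equiv.swap j.castSucc (Fin.last n) (extPerm σ' i.castSucc)) = _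
  rw [Equiv.swap_apply_self, extPerm_castSucc]

lemma castPred_dPerm_last {n : ℕ} (σ' : Equiv.Perm (Fin n)) (j : Fin n)
    (hpf : dPerm σ' j (Fin.last n) ≠ Fin.last n) :
    (dPerm σ' j (Fin.last n)).castPred hpf = j := by
  apply Fin.castSucc_injective
  rw [Fin.castSucc_castPred, dPerm_last]

/-! ### The three cases of the involution-side recursion -/

lemma gP_case_L (n h : ℕ) :
    (∑ p ∈ univ.filter (fun p : Equiv.Perm (Fin (n+1)) × Finset (Fin (n+1)) =>
        ((POk p ∧ p.2.card = h) ∧ ¬ Fin.last n ∈ p.2) ∧ p.1 (Fin.last n) = Fin.last n),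
      (X : Polynomial ℤ) ^ Wt p.1 p.2)
    = X ^ h * gP n h := by
  rw [gP, Finset.mul_sum]
  refine Finset.sum_bij' (fun p _ => (rPerm p.1, backO p.2))
    (fun q _ => (extPerm q.1, mapO q.2)) ?_ ?_ ?_ ?_ ?_
  · intro p hp
    rw [Finset.mem_filter] at hp
    obtain ⟨-, ⟨⟨⟨hinv, hfixp⟩, hcard⟩, hnm⟩, hl⟩ := hp
    rw [Finset.mem_filter]
    refine ⟨Finset.mem_univ _, ⟨rPerm_invol hinv, ?_⟩, ?_⟩
    · intro m hm
      exact rPerm_fix hinv (hfixp _ ((mem_backO _ m).mp hm))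
    · rw [card_backO _ hnm]; exact hcard
  · intro q hq
    rw [Finset.mem_filter] at hq
    obtain ⟨-, ⟨hinv, hfixq⟩, hcard⟩ := hq
    rw [Finset.mem_filter]
    refine ⟨Finset.mem_univ _, ⟨⟨⟨extPerm_invol hinv, ?_⟩, ?_⟩, ?_⟩, extPerm_last _⟩
    · intro x hx
      obtain ⟨m, hm, rfl⟩ := Finset.mem_map.mp hx
      show extPerm q.1 m.castSucc = m.castSucc
      rw [extPerm_castSucc, hfixq m hm]
    · rw [card_mapO]; exact hcard
    · exact last_not_mem_mapO _
  · intro p hp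
    rw [Finset.mem_filter] at hp
    obtain ⟨-, ⟨⟨⟨hinv, hfixp⟩, hcard⟩, hnm⟩, hl⟩ := hp
    exact Prod.ext (extPerm_rPerm hl) (mapO_backO _ hnm)
  · intro q hq
    exact Prod.ext (rPerm_extPerm q.1) (backO_mapO q.2)
  · intro p hp
    rw [Finset.mem_filter] at hp
    obtain ⟨-, ⟨⟨⟨hinv, hfixp⟩, hcard⟩, hnm⟩, hl⟩ := hp
    have hW := Wt_ext_L (rPerm p.1) (backO p.2)
    rw [extPerm_rPerm hl, mapO_backO _ hnm, card_backO _ hnm, hcard] at hW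
    rw [hW, pow_add, mul_comm]

lemma gP_case_U (n h : ℕ) :
    (∑ p ∈ univ.filter (fun p : Equiv.Perm (Fin (n+1)) × Finset (Fin (n+1)) =>
        (POk p ∧ p.2.card = h) ∧ Fin.last n ∈ p.2),
      (X : Polynomial ℤ) ^ Wt p.1 p.2)
    = if h = 0 then 0 else X ^ h * gP n (h-1) := by
  by_cases h0 : h = 0
  · subst h0
    rw [if_pos rfl]
    apply Finset.sum_eq_zero
    intro p hp
    exfalso
    rw [Finset.mem_filter] at hp
    obtain ⟨-, ⟨-, hcard⟩, hmem⟩ := hp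
    rw [Finset.card_eq_zero.mp hcard] at hmem
    exact Finset.notMem_empty _ hmem
  · rw [if_neg h0]
    obtain ⟨h', rfl⟩ : ∃ h', h = h' + 1 := ⟨h - 1, by omega⟩
    simp only [Nat.add_sub_cancel]
    rw [gP, Finset.mul_sum]
    refine Finset.sum_bij' (fun p _ => (rPerm p.1, backO p.2))
      (fun q _ => (extPerm q.1, insert (Fin.last n) (mapO q.2))) ?_ ?_ ?_ ?_ ?_
    · intro p hp
      rw [Finset.mem_filter] at hp
      obtain ⟨-, ⟨⟨hinv, hfixp⟩, hcard⟩, hmem⟩ := hp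
      rw [Finset.mem_filter]
      refine ⟨Finset.mem_univ _, ⟨rPerm_invol hinv, ?_⟩, ?_⟩
      · intro m hm
        exact rPerm_fix hinv (hfixp _ ((mem_backO _ m).mp hm))
      · show (backO p.2).card = h'
        have := card_backO_mem p.2 hmem
        omega
    · intro q hq
      rw [Finset.mem_filter] at hq
      obtain ⟨-, ⟨hinv, hfixq⟩, hcard⟩ := hq
      rw [Finset.mem_filter]
      refine ⟨Finset.mem_univ _, ⟨⟨extPerm_invol hinv, ?_⟩, ?_⟩, Finset.mem_insert_self _ _⟩
      · intro x hx
        rcases Finset.mem_insert.mp hx with rfl | hx'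
        · exact extPerm_last _
        · obtain ⟨m, hm, rfl⟩ := Finset.mem_map.mp hx'
          show extPerm q.1 m.castSucc = m.castSucc
          rw [extPerm_castSucc, hfixq m hm]
      · rw [Finset.card_insert_of_notMem (last_not_mem_mapO _), card_mapO, hcard]
    · intro p hp
      rw [Finset.mem_filter] at hp
      obtain ⟨-, ⟨⟨hinv, hfixp⟩, hcard⟩, hmem⟩ := hp
      exact Prod.ext (extPerm_rPerm (hfixp _ hmem)) (insert_last_mapO_backO _ hmem)
    · intro q hq
      refine Prod.ext (rPerm_extPerm q.1) ?_
      show backO (insert (Fin.last n) (mapO q.2)) = q.2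
      rw [backO_insert_last, backO_mapO]
    · intro p hp
      rw [Finset.mem_filter] at hp
      obtain ⟨-, ⟨⟨hinv, hfixp⟩, hcard⟩, hmem⟩ := hp
      have hW := Wt_ext_U (rPerm p.1) (backO p.2)
      rw [extPerm_rPerm (hfixp _ hmem), insert_last_mapO_backO _ hmem] at hW
      have hcb : (backO p.2).card = h' := by
        have := card_backO_mem p.2 hmem
        omega
      rw [hW, hcb, pow_add, pow_add]
      ring

lemma gP_case_D (n h : ℕ) :
    (∑ p ∈ univ.filter (fun p : Equiv.Perm (Fin (n+1)) × Finset (Fin (n+1)) =>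
        ((POk p ∧ p.2.card = h) ∧ ¬ Fin.last n ∈ p.2) ∧ ¬ p.1 (Fin.last n) = Fin.last n),
      (X : Polynomial ℤ) ^ Wt p.1 p.2)
    = qint (h+1) * gP n (h+1) := by
  have step2 : (∑ q ∈ univ.filter (fun q : (Equiv.Perm (Fin n) × Finset (Fin n)) × Fin n =>
      (POk q.1 ∧ q.1.2.card = h + 1) ∧ q.2 ∈ q.1.2),
      (X : Polynomial ℤ) ^ (Wt q.1.1 q.1.2 + (q.1.2.filter (· < q.2)).card))
      = qint (h+1) * gP n (h+1) := by
    rw [Finset.sum_finset_product _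
      (univ.filter (fun q1 : Equiv.Perm (Fin n) × Finset (Fin n) => POk q1 ∧ q1.2.card = h+1))
      (fun q1 => q1.2) (fun q => by
        rw [Finset.mem_filter, Finset.mem_filter]
        constructor
        · rintro ⟨-, ⟨h1, h2⟩, h3⟩; exact ⟨⟨Finset.mem_univ _, h1, h2⟩, h3⟩
        · rintro ⟨⟨-, h1, h2⟩, h3⟩; exact ⟨Finset.mem_univ _, ⟨h1, h2⟩, h3⟩)]
    rw [gP, Finset.mul_sum]
    apply Finset.sum_congr rfl
    intro q1 hq1
    rw [Finset.mem_filter] at hq1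
    have : ∑ a ∈ q1.2, (X : Polynomial ℤ) ^ (Wt q1.1 q1.2 + (q1.2.filter (· < a)).card)
        = X ^ Wt q1.1 q1.2 * qint (h+1) := by
      rw [← hq1.2.2, ← rankSum q1.2, Finset.mul_sum]
      apply Finset.sum_congr rfl
      intro a _
      rw [pow_add]
    rw [this]
    ring
  rw [← step2]
  refine Finset.sum_bij'
    (fun p hp => (((rPerm p.1,
        insert ((p.1 (Fin.last n)).castPred ((Finset.mem_filter.mp hp).2.2) ) (backO p.2)),
        (p.1 (Fin.last n)).castPred ((Finset.mem_filter.mp hp).2.2))))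
    (fun q _ => (dPerm q.1.1 q.2, mapO (q.1.2.erase q.2))) ?_ ?_ ?_ ?_ ?_
  · intro p hp
    have hp' := (Finset.mem_filter.mp hp)
    obtain ⟨-, ⟨⟨⟨hinv, hfixp⟩, hcard⟩, hnm⟩, hnl⟩ := hp'
    rw [Finset.mem_filter]
    have hj0 : ((p.1 (Fin.last n)).castPred ((Finset.mem_filter.mp hp).2.2)).castSucc
        = p.1 (Fin.last n) := Fin.castSucc_castPred _ _
    have hj0nm : (p.1 (Fin.last n)).castPred (Finset.mem_filter.mp hp).2.2 ∉ backO p.2 := by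
      intro hc
      rw [mem_backO, hj0] at hc
      have := hfixp _ hc
      rw [perm_sq_apply hinv] at this
      exact hnl this.symm
    refine ⟨Finset.mem_univ _, ⟨⟨rPerm_invol hinv, ?_⟩, ?_⟩, Finset.mem_insert_self _ _⟩
    · intro m hm
      rcases Finset.mem_insert.mp hm with rfl | hm'
      · exact rPerm_fix_j hinv hnl
      · exact rPerm_fix hinv (hfixp _ ((mem_backO _ m).mp hm'))
    · rw [Finset.card_insert_of_notMem hj0nm, card_backO _ hnm, hcard]
  · intro q hq
    rw [Finset.mem_filter] at hq
    obtain ⟨-, ⟨⟨hinv, hfixq⟩, hcard⟩, hjm⟩ := hq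
    have hfj : q.1.1 q.2 = q.2 := hfixq _ hjm
    rw [Finset.mem_filter]
    refine ⟨Finset.mem_univ _, ⟨⟨⟨dPerm_invol hinv hfj, ?_⟩, ?_⟩, last_not_mem_mapO _⟩, ?_⟩
    · intro x hx
      obtain ⟨m, hm, rfl⟩ := Finset.mem_map.mp hx
      rw [Finset.mem_erase] at hm
      show dPerm q.1.1 q.2 m.castSucc = m.castSucc
      rw [dPerm_apply_ne _ hfj hm.1, hfixq m hm.2]
    · rw [card_mapO, Finset.card_erase_of_mem hjm, hcard]
      omega
    · rw [dPerm_last]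
      exact (Fin.castSucc_lt_last _).ne
  · intro p hp
    have hp' := (Finset.mem_filter.mp hp)
    obtain ⟨-, ⟨⟨⟨hinv, hfixp⟩, hcard⟩, hnm⟩, hnl⟩ := hp'
    have hj0nm : (p.1 (Fin.last n)).castPred (Finset.mem_filter.mp hp).2.2 ∉ backO p.2 := by
      intro hc
      rw [mem_backO, Fin.castSucc_castPred] at hc
      have := hfixp _ hc
      rw [perm_sq_apply hinv] at this
      exact hnl this.symm
    refine Prod.ext (dPerm_rPerm hinv hnl) ?_
    show mapO ((insert _ (backO p.2)).erase _) = p.2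
    rw [Finset.erase_insert hj0nm, mapO_backO _ hnm]
  · intro q hq
    dsimp only
    rw [Finset.mem_filter] at hq
    obtain ⟨-, ⟨⟨hinv, hfixq⟩, hcard⟩, hjm⟩ := hq
    have hfj : q.1.1 q.2 = q.2 := hfixq _ hjm
    refine Prod.ext (Prod.ext ?_ ?_) ?_
    · exact rPerm_dPerm q.1.1 hfj
    · rw [castPred_dPerm_last q.1.1 q.2 (by
          rw [dPerm_last]; exact (Fin.castSucc_lt_last _).ne), backO_mapO,
        Finset.insert_erase hjm]
    · exact castPred_dPerm_last q.1.1 q.2 (by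
        rw [dPerm_last]; exact (Fin.castSucc_lt_last _).ne)
  · intro p hp
    have hp' := (Finset.mem_filter.mp hp)
    obtain ⟨-, ⟨⟨⟨hinv, hfixp⟩, hcard⟩, hnm⟩, hnl⟩ := hp'
    have hj0nm : (p.1 (Fin.last n)).castPred (Finset.mem_filter.mp hp).2.2 ∉ backO p.2 := by
      intro hc
      rw [mem_backO, Fin.castSucc_castPred] at hc
      have := hfixp _ hc
      rw [perm_sq_apply hinv] at this
      exact hnl this.symm
    have hW := Wt_ext_D (rPerm p.1) (rPerm_fix_j hinv (Finset.mem_filter.mp hp).2.2)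
      (Finset.mem_insert_self ((p.1 (Fin.last n)).castPred ((Finset.mem_filter.mp hp).2.2))
        (backO p.2))
    rw [dPerm_rPerm hinv, Finset.erase_insert hj0nm, mapO_backO _ hnm] at hW
    rw [hW]

lemma gP_rec (n h : ℕ) :
    gP (n+1) h = X ^ h * gP n h + (if h = 0 then 0 else X ^ h * gP n (h-1))
      + qint (h+1) * gP n (h+1) := by
  have eU : ((univ.filter (fun p : Equiv.Perm (Fin (n+1)) × Finset (Fin (n+1)) =>
        POk p ∧ p.2.card = h)).filter (fun p => Fin.last n ∈ p.2))
      = univ.filter (fun p : Equiv.Perm (Fin (n+1)) × Finset (Fin (n+1)) =>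
        (POk p ∧ p.2.card = h) ∧ Fin.last n ∈ p.2) := by
    ext p; simp only [Finset.mem_filter, Finset.mem_univ, true_and]
  have eL : (((univ.filter (fun p : Equiv.Perm (Fin (n+1)) × Finset (Fin (n+1)) =>
        POk p ∧ p.2.card = h)).filter (fun p => ¬ Fin.last n ∈ p.2)).filter
        (fun p => p.1 (Fin.last n) = Fin.last n))
      = univ.filter (fun p : Equiv.Perm (Fin (n+1)) × Finset (Fin (n+1)) =>
        ((POk p ∧ p.2.card = h) ∧ ¬ Fin.last n ∈ p.2) ∧ p.1 (Fin.last n) = Fin.last n) := by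
    ext p
    simp only [Finset.mem_filter, Finset.mem_univ, true_and]
    all_goals tauto
  have eD : (((univ.filter (fun p : Equiv.Perm (Fin (n+1)) × Finset (Fin (n+1)) =>
        POk p ∧ p.2.card = h)).filter (fun p => ¬ Fin.last n ∈ p.2)).filter
        (fun p => ¬ p.1 (Fin.last n) = Fin.last n))
      = univ.filter (fun p : Equiv.Perm (Fin (n+1)) × Finset (Fin (n+1)) =>
        ((POk p ∧ p.2.card = h) ∧ ¬ Fin.last n ∈ p.2) ∧ ¬ p.1 (Fin.last n) = Fin.last n) := by
    ext p
    simp only [Finset.mem_filter, Finset.mem_univ, true_and]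
    all_goals tauto
  rw [gP, ← Finset.sum_filter_add_sum_filter_not
      (univ.filter (fun p : Equiv.Perm (Fin (n+1)) × Finset (Fin (n+1)) =>
        POk p ∧ p.2.card = h)) (fun p => Fin.last n ∈ p.2),
    ← Finset.sum_filter_add_sum_filter_not
      (((univ.filter (fun p : Equiv.Perm (Fin (n+1)) × Finset (Fin (n+1)) =>
        POk p ∧ p.2.card = h))).filter (fun p => ¬ Fin.last n ∈ p.2))
      (fun p => p.1 (Fin.last n) = Fin.last n),
    eU, eL, eD, gP_case_U n h, gP_case_L n h, gP_case_D n h]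
  ring

lemma fP_eq_gP (n h : ℕ) : fP n h = gP n h := by
  induction n generalizing h with
  | zero => rw [fP_zero, gP_zero]
  | succ n ih => rw [fP_rec, gP_rec, ih, ih, ih]

/-! ### Identification of the two ends -/

lemma LHS_eq (n : ℕ) :
    ∑ μ ∈ Finset.univ.filter (fun μ : Fin n → Step => IsMotzkin μ), Hq μ = fP n 0 := by
  unfold fP
  apply Finset.sum_congr _ (fun _ _ => rfl)
  apply Finset.filter_congr
  intro μ _
  show IsMotzkin μ ↔ (Pre μ ∧ UT μ = DT μ + 0)
  unfold IsMotzkin Pre UT DT Ucnt Dcnt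
  simp

lemma Wt_val {n : ℕ} (σ : Equiv.Perm (Fin n)) (hσ : σ * σ = 1) :
    2 * Wt σ ∅ = ell σ + cyc σ := by
  induction n with
  | zero =>
    have h1 : Wt σ ∅ = 0 := rfl
    have h2 : ell σ = 0 := by
      rw [ell, Finset.card_eq_zero, Finset.filter_eq_empty_iff]
      intro p _
      exact absurd p.1.2 p.1.elim0
    have h3 : cyc σ = 0 := by
      rw [cyc, Finset.card_eq_zero, Finset.filter_eq_empty_iff]
      intro i _
      exact i.elim0
    rw [h1, h2, h3]
  | succ n ih =>
    have hmapOempty : mapO (∅ : Finset (Fin n)) = (∅ : Finset (Fin (n+1))) := by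
      rw [mapO, Finset.map_empty]
    by_cases hl : σ (Fin.last n) = Fin.last n
    · -- last is a fixed point
      have hr := ih (rPerm σ) (rPerm_invol hσ)
      have hee : extPerm (rPerm σ) = σ := extPerm_rPerm hl
      have hW : Wt σ ∅ = Wt (rPerm σ) ∅ := by
        have h1 := Wt_ext_L (rPerm σ) ∅
        rw [hee, hmapOempty, Finset.card_empty, add_zero] at h1
        exact h1
      have hE : ell σ = ell (rPerm σ) := by
        conv_lhs => rw [← hee]
        rw [ell_extPerm]
      have hC : cyc σ = cyc (rPerm σ) := by
        conv_lhs => rw [← hee]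
        rw [cyc_extPerm]
      rw [hW, hE, hC]
      exact hr
    · -- last is matched to j0
      have hσ' := rPerm_invol hσ
      have hr := ih (rPerm σ) hσ'
      set σ' := rPerm σ with hσ'def
      set j0 : Fin n := (σ (Fin.last n)).castPred hl with hj0def
      have hfixj : σ' j0 = j0 := rPerm_fix_j hσ hl
      have hd : dPerm σ' j0 = σ := dPerm_rPerm hσ hl
      have hcj : j0.castSucc = σ (Fin.last n) := Fin.castSucc_castPred _ _
      have hLL : σ (σ (Fin.last n)) = Fin.last n := perm_sq_apply hσ _
      have hslt : σ (Fin.last n) < Fin.last n :=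
        lt_of_le_of_ne (Fin.le_last _) hl
      have hcs : ∀ i : Fin n, i ≠ j0 → σ i.castSucc = (σ' i).castSucc := by
        intro i hi
        rw [hσ'def, rPerm_castSucc]
        refine (Equiv.swap_apply_of_ne_of_ne ?_ ?_).symm
        · intro hc
          exact (Fin.castSucc_lt_last i).ne (σ.injective hc)
        · intro hc
          apply hi
          apply Fin.castSucc_injective
          rw [hcj, ← perm_sq_apply hσ i.castSucc, hc]
      have hsj0 : σ j0.castSucc = Fin.last n := by rw [hcj, hLL]
      -- the four counting quantities
      set NI := (univ.filter (fun b : Fin n => j0 < b)).card with hNIdef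
      set NB := (univ.filter (fun b : Fin n => j0 < b ∧ σ' b < j0)).card with hNBdef
      set B1 := (univ.filter (fun a : Fin n => a < j0 ∧ j0 < σ' a)).card with hB1def
      set TT := (univ.filter (fun i : Fin n =>
        (¬ σ' i < i ∧ j0 ≤ i) ∨ (σ' i < i ∧ j0 < σ' i))).card with hTTdef
      -- (Fa) Wt σ ∅ = Wt σ' ∅ + TT
      have hFa : Wt σ ∅ = Wt σ' ∅ + TT := by
        have h1 := Wt_ext_D σ' hfixj (Finset.mem_singleton_self j0)
        rw [hd, Finset.erase_singleton, hmapOempty, Wt_singleton σ' hfixj,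
          Finset.filter_singleton, if_neg (lt_irrefl j0), Finset.card_empty, add_zero] at h1
        exact h1
      -- (Fb) cyc σ = cyc σ' + 1
      have hFb : cyc σ = cyc σ' + 1 := by
        rw [cyc_sum, cyc_sum, Fin.sum_univ_castSucc,
          if_neg ((Fin.le_last (σ (Fin.last n))).not_gt), add_zero]
        have hpt : ∀ i : Fin n, (if i.castSucc < σ i.castSucc then 1 else 0)
            = (if i < σ' i then 1 else 0) + (if i = j0 then 1 else 0) := by
          intro i
          by_cases hi : i = j0
          · subst hi
            rw [if_pos (by rw [hsj0]; exact Fin.castSucc_lt_last j0),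
              if_neg (by rw [hfixj]; exact lt_irrefl _), if_pos rfl]
          · rw [hcs i hi]
            simp only [Fin.castSucc_lt_castSucc_iff]
            rw [if_neg hi, add_zero]
        rw [Finset.sum_congr rfl (fun i _ => hpt i), Finset.sum_add_distrib,
          Finset.sum_ite_eq' univ j0 (fun _ => 1), if_pos (Finset.mem_univ j0)]
      -- reindexing lemmas
      have hB1NB : B1 = NB := by
        rw [hB1def, hNBdef]
        apply card_nbij_invol σ' hσ'
        · rintro i ⟨h1, h2⟩
          exact ⟨h2, by rw [perm_sq_apply hσ']; exact h1⟩
        · rintro i ⟨h1, h2⟩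
          exact ⟨h2, by rw [perm_sq_apply hσ']; exact h1⟩
      have hreidx : (univ.filter (fun i : Fin n => j0 < σ' i)).card = NI := by
        rw [hNIdef]
        apply card_nbij_invol σ' hσ'
        · intro i h1
          exact h1
        · intro i h1
          rw [perm_sq_apply hσ']
          exact h1
      -- (Fd) TT + NB = NI + 1
      have hFd : TT + NB = NI + 1 := by
        have hcover : univ.filter (fun i : Fin n => j0 ≤ i)
            = (univ.filter (fun i : Fin n =>
                (¬ σ' i < i ∧ j0 ≤ i) ∨ (σ' i < i ∧ j0 < σ' i)))
              ∪ (univ.filter (fun b : Fin n => j0 < b ∧ σ' b < j0)) := by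
          ext i
          simp only [Finset.mem_filter, Finset.mem_univ, true_and, Finset.mem_union]
          constructor
          · intro hle
            by_cases hD : σ' i < i
            · rcases lt_trichotomy (σ' i) j0 with h1 | h1 | h1
              · refine Or.inr ⟨?_, h1⟩
                rcases lt_or_eq_of_le hle with h2 | h2
                · exact h2
                · exfalso; rw [← h2] at hD; rw [hfixj] at hD; exact lt_irrefl _ hD
              · exfalso
                have : i = j0 := by
                  rw [← perm_sq_apply hσ' i, h1, hfixj]
                rw [this, hfixj] at hD
                exact lt_irrefl _ hD
              · exact Or.inl (Or.inr ⟨hD, h1⟩)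
            · exact Or.inl (Or.inl ⟨hD, hle⟩)
          · rintro ((⟨-, h2⟩ | ⟨h1, h2⟩) | ⟨h1, -⟩)
            · exact h2
            · exact le_of_lt (lt_trans h2 h1)
            · exact le_of_lt h1
        have hdisj : Disjoint
            (univ.filter (fun i : Fin n =>
              (¬ σ' i < i ∧ j0 ≤ i) ∨ (σ' i < i ∧ j0 < σ' i)))
            (univ.filter (fun b : Fin n => j0 < b ∧ σ' b < j0)) := by
          rw [Finset.disjoint_left]
          intro i h1 h2
          rw [Finset.mem_filter] at h1 h2
          obtain ⟨-, hb1, hb2⟩ := h2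
          rcases h1.2 with ⟨hn1, -⟩ | ⟨-, hg⟩
          · exact hn1 (lt_trans hb2 hb1)
          · exact absurd (lt_trans hg hb2) (lt_irrefl j0)
        have hins : univ.filter (fun i : Fin n => j0 ≤ i)
            = insert j0 (univ.filter (fun i : Fin n => j0 < i)) := by
          ext i
          simp only [Finset.mem_filter, Finset.mem_univ, true_and, Finset.mem_insert]
          constructor
          · intro hle
            rcases lt_or_eq_of_le hle with h | h
            · exact Or.inr h
            · exact Or.inl h.symm
          · rintro (rfl | h)
            · exact le_refl _
            · exact le_of_lt h
        have h1 := congrArg Finset.card hcover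
        rw [Finset.card_union_of_disjoint hdisj] at h1
        have h2 := congrArg Finset.card hins
        rw [Finset.card_insert_of_notMem (by
          rw [Finset.mem_filter]
          rintro ⟨-, hc⟩
          exact lt_irrefl _ hc)] at h2
        rw [← hTTdef, ← hNBdef, ← hNIdef] at *
        omega
      -- (Fc) ell σ + NB + B1 = ell σ' + 2 * NI + 1
      have hFc : ell σ + NB + B1 = ell σ' + 2 * NI + 1 := by
        have hrow0 : (∑ b : Fin (n+1),
            if Fin.last n < b ∧ σ b < σ (Fin.last n) then 1 else 0) = 0 := by
          apply Finset.sum_eq_zero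
          intro b _
          exact if_neg (fun hc => (Fin.le_last b).not_gt hc.1)
        have hA : (∑ i : Fin n,
            if i.castSucc < Fin.last n ∧ σ (Fin.last n) < σ i.castSucc then 1 else 0)
            = NI + 1 := by
          have hpt : ∀ i : Fin n,
              (if i.castSucc < Fin.last n ∧ σ (Fin.last n) < σ i.castSucc then 1 else 0)
              = (if j0 < σ' i then 1 else 0) + (if i = j0 then 1 else 0) := by
            intro i
            by_cases hi : i = j0
            · subst hi
              rw [if_pos ⟨Fin.castSucc_lt_last j0, by
                  rw [show σ j0.castSucc = Fin.last n from hsj0]; exact hslt⟩,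
                if_neg (by rw [hfixj]; exact lt_irrefl _), if_pos rfl]
            · rw [if_neg hi, add_zero, hcs i hi, ← hcj]
              simp only [Fin.castSucc_lt_castSucc_iff]
              exact if_congr (and_iff_right (Fin.castSucc_lt_last i)) rfl rfl
          rw [Finset.sum_congr rfl (fun i _ => hpt i), Finset.sum_add_distrib,
            Finset.sum_ite_eq' univ j0 (fun _ => 1), if_pos (Finset.mem_univ j0),
            ← Finset.card_filter, hreidx]
        -- double sums
        have hcol : ∀ i : Fin n,
            (if i.castSucc < j0.castSucc ∧ σ j0.castSucc < σ i.castSucc then 1 else 0) = 0 := by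
          intro i
          rw [if_neg]
          rintro ⟨-, hc⟩
          rw [hsj0] at hc
          exact (Fin.le_last _).not_gt hc
        have hrowF : ∀ k : Fin n, k ≠ j0 →
            (if j0.castSucc < k.castSucc ∧ σ k.castSucc < σ j0.castSucc then 1 else 0)
            = (if j0 < k then 1 else 0) := by
          intro k hk
          rw [hsj0, hcs k hk]
          simp only [Fin.castSucc_lt_castSucc_iff]
          exact if_congr (and_iff_left (Fin.castSucc_lt_last _)) rfl rfl
        have hFjj : (if j0.castSucc < j0.castSucc ∧ σ j0.castSucc < σ j0.castSucc
            then 1 else 0) = 0 := if_neg (fun hc => lt_irrefl _ hc.1)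
        have hGjj : (if j0 < j0 ∧ σ' j0 < σ' j0 then (1:ℕ) else 0) = 0 :=
          if_neg (fun hc => lt_irrefl _ hc.1)
        -- split both double sums at j0
        have hsplit : ∀ F : Fin n → Fin n → ℕ, (∑ i : Fin n, ∑ k : Fin n, F i k)
            = (∑ i ∈ univ.erase j0, ∑ k ∈ univ.erase j0, F i k)
              + (∑ i ∈ univ.erase j0, F i j0)
              + ((∑ k ∈ univ.erase j0, F j0 k) + F j0 j0) := by
          intro F
          rw [← Finset.sum_erase_add univ _ (Finset.mem_univ j0)]
          congr 1
          · rw [← Finset.sum_add_distrib]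
            apply Finset.sum_congr rfl
            intro i _
            rw [← Finset.sum_erase_add univ (F i) (Finset.mem_univ j0)]
          · rw [← Finset.sum_erase_add univ (F j0) (Finset.mem_univ j0)]
        have hSFG : (∑ i ∈ univ.erase j0, ∑ k ∈ univ.erase j0,
              (if i.castSucc < k.castSucc ∧ σ k.castSucc < σ i.castSucc then 1 else 0))
            = ∑ i ∈ univ.erase j0, ∑ k ∈ univ.erase j0,
              (if i < k ∧ σ' k < σ' i then (1:ℕ) else 0) := by
          apply Finset.sum_congr rfl
          intro i hi
          apply Finset.sum_congr rfl
          intro k hk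
          rw [hcs i (Finset.mem_erase.mp hi).1, hcs k (Finset.mem_erase.mp hk).1]
          simp only [Fin.castSucc_lt_castSucc_iff]
        have hcolsum : (∑ i ∈ univ.erase j0,
            (if i.castSucc < j0.castSucc ∧ σ j0.castSucc < σ i.castSucc then 1 else 0)) = 0 :=
          Finset.sum_eq_zero (fun i _ => hcol i)
        have hrowsum : (∑ k ∈ univ.erase j0,
            (if j0.castSucc < k.castSucc ∧ σ k.castSucc < σ j0.castSucc then 1 else 0))
            = NI := by
          rw [Finset.sum_congr rfl (fun k hk => hrowF k (Finset.mem_erase.mp hk).1)]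
          rw [hNIdef, Finset.card_filter]
          rw [← Finset.sum_erase_add univ _ (Finset.mem_univ j0), if_neg (lt_irrefl j0),
            add_zero]
        have hrowG : (∑ k ∈ univ.erase j0,
            (if j0 < k ∧ σ' k < σ' j0 then (1:ℕ) else 0)) = NB := by
          rw [hNBdef, Finset.card_filter, ← Finset.sum_erase_add univ _ (Finset.mem_univ j0),
            if_neg (fun hc => lt_irrefl _ hc.1), add_zero]
          apply Finset.sum_congr rfl
          intro k _
          rw [hfixj]
        have hcolG : (∑ i ∈ univ.erase j0,
            (if i < j0 ∧ σ' j0 < σ' i then (1:ℕ) else 0)) = B1 := by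
          rw [hB1def, Finset.card_filter, ← Finset.sum_erase_add univ _ (Finset.mem_univ j0),
            if_neg (fun hc => lt_irrefl _ hc.1), add_zero]
          apply Finset.sum_congr rfl
          intro k _
          rw [hfixj]
        -- assemble ell σ
        have hellσ : ell σ = (∑ i ∈ univ.erase j0, ∑ k ∈ univ.erase j0,
            (if i.castSucc < k.castSucc ∧ σ k.castSucc < σ i.castSucc then 1 else 0))
            + NI + (NI + 1) := by
          rw [ell_sum σ, Fin.sum_univ_castSucc, hrow0, add_zero]
          have : ∀ i : Fin n, (∑ b : Fin (n+1),
              if i.castSucc < b ∧ σ b < σ i.castSucc then 1 else 0)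
              = (∑ k : Fin n, if i.castSucc < k.castSucc ∧ σ k.castSucc < σ i.castSucc
                  then 1 else 0)
                + (if i.castSucc < Fin.last n ∧ σ (Fin.last n) < σ i.castSucc then 1 else 0) := by
            intro i
            rw [Fin.sum_univ_castSucc]
          rw [Finset.sum_congr rfl (fun i _ => this i), Finset.sum_add_distrib, hA,
            hsplit (fun i k => if i.castSucc < k.castSucc ∧ σ k.castSucc < σ i.castSucc
              then 1 else 0), hcolsum, add_zero, hrowsum, hFjj, add_zero]
        have hellσ' : ell σ' = (∑ i ∈ univ.erase j0, ∑ k ∈ univ.erase j0,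
            (if i < k ∧ σ' k < σ' i then (1:ℕ) else 0)) + B1 + NB := by
          rw [ell_sum σ', hsplit (fun i k => if i < k ∧ σ' k < σ' i then (1:ℕ) else 0),
            hcolG, hrowG, hGjj, add_zero]
        rw [hellσ, hellσ', hSFG]
        omega
      omega


lemma RHS_eq (n : ℕ) :
    gP n 0 = ∑ σ ∈ Finset.univ.filter (fun σ : Equiv.Perm (Fin n) => σ * σ = 1),
        (X : Polynomial ℤ) ^ ((ell σ + cyc σ) / 2) := by
  unfold gP
  apply Finset.sum_nbij' (fun p => p.1) (fun σ => (σ, ∅))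
  · intro p hp
    simp only [Finset.mem_filter] at hp ⊢
    exact ⟨Finset.mem_univ _, hp.2.1.1⟩
  · intro σ hσ
    simp only [Finset.mem_filter] at hσ ⊢
    exact ⟨Finset.mem_univ _, ⟨hσ.2, fun i hi => absurd hi (Finset.notMem_empty i)⟩, rfl⟩
  · intro p hp
    simp only [Finset.mem_filter] at hp
    have : p.2 = ∅ := Finset.card_eq_zero.mp hp.2.2
    exact Prod.ext rfl this.symm
  · intro σ hσ; rfl
  · intro p hp
    simp only [Finset.mem_filter] at hp
    have h2 : p.2 = ∅ := Finset.card_eq_zero.mp hp.2.2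
    rw [h2]
    congr 1
    have := Wt_val p.1 hp.2.1.1
    omega

/-- `Σ_{μ ∈ M_n} H[μ;q] = Σ_{σ ∈ I_n} q^{ℓ̂(σ)}` with `ℓ̂ = (ℓ + c)/2`. -/
theorem motzkin_sum_eq_involution_rank_gf (n : ℕ) :
    ∑ μ ∈ Finset.univ.filter (fun μ : Fin n → Step => IsMotzkin μ), Hq μ
    = ∑ σ ∈ Finset.univ.filter (fun σ : Equiv.Perm (Fin n) => σ * σ = 1),
        (X : Polynomial ℤ) ^ ((ell σ + cyc σ) / 2) := by
  rw [LHS_eq, fP_eq_gP, RHS_eq]
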